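/- Let m > 1 be a deficient number, k > 1 an integer, and p_1, …, p_k primes with σ(m) + 1 < p_1 < ⋯ < p_k. Let h* = ⌊(p_1 − σ(m))/(p_k − p_1)⌋ and U = ⋃_{j=0}^{h*} { n ∈ ℕ : j·p_k + σ(m) < n < (j+1)·p_1 }. If w = m·p_1⋯p_k is abundant and Δ(w) ∈ U, then w/p_k = m·p_1⋯p_{k−1} is deficient. -/
import Mathlib


/-- `sigma' n` is the sum of all divisors of `n` (including `n`). -/
def sigma' (n : ℕ) : ℕ := ∑ d ∈ n.divisors, d

/-- A natural number is abundant if `σ(n) > 2n`. -/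
def Abundant (n : ℕ) : Prop := 2 * n < sigma' n

/-- A natural number is deficient if `σ(n) < 2n`. -/
def Deficient (n : ℕ) : Prop := sigma' n < 2 * n

/-- A natural number is semiperfect if it is the sum of some set of
its distinct proper divisors. -/
def Semiperfect (n : ℕ) : Prop := ∃ S ⊆ n.properDivisors, ∑ d ∈ S, d = n

/-- A natural number is weird if it is abundant but not semiperfect. -/
def Weird (n : ℕ) : Prop := Abundant n ∧ ¬ Semiperfect n

lemma sigma'_mul {a b : ℕ} (h : a.Coprime b) : sigma' (a * b) = sigma' a * sigma' b :=
  Nat.Coprime.sum_divisors_mul h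

lemma sigma'_prime {q : ℕ} (hq : q.Prime) : sigma' q = q + 1 := by
  unfold sigma'
  rw [hq.divisors, Finset.sum_pair hq.one_lt.ne]
  omega

lemma sigma'_lb {n : ℕ} (hn : 1 < n) : n + 1 ≤ sigma' n := by
  have h : ({1, n} : Finset ℕ) ⊆ n.divisors := by
    intro d hd
    simp only [Finset.mem_insert, Finset.mem_singleton] at hd
    rcases hd with rfl | rfl
    · exact Nat.one_mem_divisors.2 (by omega)
    · exact Nat.mem_divisors_self _ (by omega)
  have h2 : ∑ d ∈ ({1, n} : Finset ℕ), d = 1 + n := Finset.sum_pair (by omega)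
  have h3 : (∑ d ∈ ({1, n} : Finset ℕ), d) ≤ ∑ d ∈ n.divisors, d := Finset.sum_le_sum_of_subset h
  unfold sigma'
  omega

/-- In the setting of the main theorem, if `w = m · p 0 ⋯ p (k-1)` is abundant and
`Δ(w) ∈ U`, then `w / p (k-1) = m · p 0 ⋯ p (k-2)` is deficient. -/
theorem div_largest_prime_deficient (m k : ℕ) (p : ℕ → ℕ) (w : ℕ)
    (hm : 1 < m) (hdef : Deficient m) (hk : 1 < k)
    (hprime : ∀ i < k, (p i).Prime)
    (hmono : ∀ i j, i < j → j < k → p i < p j)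
    (hp1 : sigma' m + 1 < p 0)
    (hw : w = m * ∏ i ∈ Finset.range k, p i)
    (hab : Abundant w)
    (hU : ∃ j ≤ (p 0 - sigma' m) / (p (k - 1) - p 0),
      j * p (k - 1) + sigma' m < sigma' w - 2 * w ∧
        sigma' w - 2 * w < (j + 1) * p 0) :
    w / p (k - 1) = m * ∏ i ∈ Finset.range (k - 1), p i ∧
      Deficient (w / p (k - 1)) := by
  obtain ⟨k', rfl⟩ : ∃ k', k = k' + 1 := ⟨k - 1, by omega⟩
  simp only [Nat.add_sub_cancel] at *
  have hk' : 1 ≤ k' := by omega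
  set q := p k' with hq
  set v := m * ∏ i ∈ Finset.range k', p i with hv
  have hqprime : q.Prime := hprime _ (by omega)
  have hsm : m + 1 ≤ sigma' m := sigma'_lb hm
  have hp0q : p 0 < q := hmono 0 k' (by omega) (by omega)
  -- w = v * q
  have hwv : w = v * q := by
    rw [hw, hv, Finset.prod_range_succ]; ring
  -- coprimality
  have hcop : q.Coprime v := by
    apply Nat.Coprime.mul_right
    · exact (Nat.Prime.coprime_iff_not_dvd hqprime).2 fun hdvd =>
        absurd (Nat.le_of_dvd (by omega) hdvd) (by omega)
    · apply Nat.Coprime.prod_right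
      intro i hi
      have hik : i < k' := Finset.mem_range.1 hi
      exact (Nat.coprime_primes hqprime (hprime i (by omega))).2
        (Nat.ne_of_gt (hmono i k' hik (by omega)))
  have hsw : sigma' w = sigma' v * (q + 1) := by
    rw [hwv, Nat.mul_comm v q, sigma'_mul hcop, sigma'_prime hqprime]; ring
  have hdiv : w / q = v := by rw [hwv, Nat.mul_div_cancel _ hqprime.pos]
  refine ⟨hdiv, ?_⟩
  rw [hdiv]
  by_contra hnd
  have hvle : 2 * v ≤ sigma' v := by
    unfold Deficient at hnd; omega
  obtain ⟨j, hj1, hj2, hj3⟩ := hU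
  have hab' : 2 * w < sigma' w := hab
  -- sigma' v ≤ Δ(w)
  have h5 : 2 * w + sigma' v ≤ sigma' w := by
    rw [hsw, hwv]
    nlinarith [Nat.mul_le_mul_right q hvle]
  rcases Nat.lt_or_ge k' 2 with hk2 | hk2
  · -- k' = 1 : v = m * p 0
    have hk1 : k' = 1 := by omega
    subst hk1
    have hvmp : v = m * p 0 := by rw [hv, Finset.prod_range_one]
    have hcopm : (p 0).Coprime m :=
      (Nat.Prime.coprime_iff_not_dvd (hprime 0 (by omega))).2 fun hdvd =>
        absurd (Nat.le_of_dvd (by omega) hdvd) (by omega)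
    have hsv : sigma' v = sigma' m * (p 0 + 1) := by
      rw [hvmp, Nat.mul_comm m (p 0), sigma'_mul hcopm, sigma'_prime (hprime 0 (by omega))]
      ring
    have hdm : sigma' m < 2 * m := hdef
    rw [hsv, hvmp] at hvle
    nlinarith [hvle, hdm, hp1]
  · -- k' ≥ 2
    have hp01 : p 0 < p 1 := hmono 0 1 (by omega) (by omega)
    have hprod : p 0 * p 1 ≤ ∏ i ∈ Finset.range k', p i := by
      have hsub : ({0, 1} : Finset ℕ) ⊆ Finset.range k' := by
        intro i hi
        simp only [Finset.mem_insert, Finset.mem_singleton] at hi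
        rcases hi with rfl | rfl <;> simp [Finset.mem_range] <;> omega
      have := Finset.prod_le_prod_of_subset_of_one_le' hsub
        (fun i hi _ => (hprime i (by simpa using Nat.lt_succ_of_lt (Finset.mem_range.1 hi))).one_lt.le)
      rwa [Finset.prod_pair (by decide)] at this
    have hvge : 2 * (p 0 * p 1) ≤ v := by
      rw [hv]
      exact Nat.mul_le_mul hm hprod
    have hjle : j ≤ p 0 - sigma' m := le_trans hj1 (Nat.div_le_self _ _)
    have hc : (j + 1) * p 0 ≤ (p 0 - sigma' m + 1) * p 0 :=
      Nat.mul_le_mul_right _ (by omega)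
    have h6 : (p 0 - sigma' m + 1) * p 0 ≤ p 0 * p 0 :=
      Nat.mul_le_mul_right _ (by omega)
    have h7 : p 0 * p 0 ≤ p 0 * p 1 := Nat.mul_le_mul_left _ (by omega)
    -- chain: 4*(p0*p1) ≤ 2*(2*v)? : 4*(p0*p1) ≤ 2*v*2? 
    have h8 : 4 * (p 0 * p 1) ≤ sigma' v := by
      calc 4 * (p 0 * p 1) = 2 * (2 * (p 0 * p 1)) := by ring
        _ ≤ 2 * v := by omega
        _ ≤ sigma' v := hvle
    have h9 : sigma' v ≤ sigma' w - 2 * w := by omega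
    have h10 : 0 < p 0 * p 1 := Nat.mul_pos (hprime 0 (by omega)).pos (hprime 1 (by omega)).pos
    omega
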